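/- arXiv:0802.2300 — 5 statements merged into one kernel-verified Lean document; each statement's English description precedes it below -/
import Mathlib

section
/- Let R be a finite commutative ring and let u, v ∈ R^n be vectors such that u_i·v_j − u_j·v_i is a unit of R for some indices i, j. Let X be a uniformly random vector in R^n, and let μ be the distribution of the pair (⟨u,X⟩, ⟨v,X⟩) ∈ R². Then μ is the uniform distribution on R²; in particular, for every (a,b) ∈ R², Pr[(⟨u,X⟩, ⟨v,X⟩) = (a,b)] = 1/|R|². -/
open Finset

/-- If `u, v : Fin n → R` over a finite commutative ring satisfy
`IsUnit (u i * v j - u j * v i)` for some `i, j`, then for uniformly random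
`X : Fin n → R`, the pair `(⟨u,X⟩, ⟨v,X⟩)` is uniform on `R²`:
for every `(a,b)`, the number of `X` with that pair of dot products, times `|R|²`,
equals `|R|ⁿ = |R^n|` (i.e. the probability is `1/|R|²`). -/
theorem stmt_0 {n : ℕ} (R : Type*) [CommRing R] [Fintype R] [DecidableEq R]
    (u v : Fin n → R)
    (h : ∃ i j : Fin n, IsUnit (u i * v j - u j * v i)) (a b : R) :
    (Finset.univ.filter
        (fun X : Fin n → R => (∑ m, u m * X m) = a ∧ (∑ m, v m * X m) = b)).card
      * (Fintype.card R) ^ 2 = Fintype.card (Fin n → R) := by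
  obtain ⟨i, j, hd⟩ := h
  by_cases hij : i = j
  · subst hij
    rw [sub_self, isUnit_zero_iff] at hd
    have hs : Subsingleton R := subsingleton_of_zero_eq_one hd
    have h1 : Fintype.card R = 1 :=
      Fintype.card_eq_one_iff.mpr ⟨0, fun x => Subsingleton.elim _ _⟩
    rw [filter_true_of_mem, card_univ, h1, one_pow, mul_one]
    intro X _
    exact ⟨Subsingleton.elim _ _, Subsingleton.elim _ _⟩
  · obtain ⟨d, hd'⟩ := hd
    set f : (Fin n → R) → R × R := fun X => (∑ m, u m * X m, ∑ m, v m * X m) with hf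
    have fsub : ∀ X Y, f (X - Y) = f X - f Y := by
      intro X Y
      simp [hf, Prod.ext_iff, mul_sub, Finset.sum_sub_distrib]
    have key : ∀ (w : Fin n → R) (α β : R),
        (∑ m, w m * (if m = i then α else if m = j then β else 0))
          = w i * α + w j * β := by
      intro w α β
      have : ∀ m ∈ univ, w m * (if m = i then α else if m = j then β else 0)
          = (if m = i then w i * α else 0) + (if m = j then w j * β else 0) := by
        intro m _
        by_cases h1 : m = i
        · subst h1; simp [hij]
        · by_cases h2 : m = j <;> simp [h1, h2, Ne.symm hij]
      rw [Finset.sum_congr rfl this, Finset.sum_add_distrib]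
      simp
    have surj : ∀ p : R × R, ∃ X₀, f X₀ = p := by
      rintro ⟨c, e⟩
      refine ⟨fun m => if m = i then (↑d⁻¹ * (v j * c - u j * e))
        else if m = j then (↑d⁻¹ * (u i * e - v i * c)) else 0, ?_⟩
      have hdi : (↑d⁻¹ : R) * ↑d = 1 := d.inv_mul
      have h1 : u i * (↑d⁻¹ * (v j * c - u j * e))
          + u j * (↑d⁻¹ * (u i * e - v i * c)) = c := by
        calc u i * (↑d⁻¹ * (v j * c - u j * e)) + u j * (↑d⁻¹ * (u i * e - v i * c))
            = ↑d⁻¹ * (u i * v j - u j * v i) * c := by ring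
          _ = ↑d⁻¹ * ↑d * c := by rw [← hd']
          _ = c := by rw [hdi, one_mul]
      have h2 : v i * (↑d⁻¹ * (v j * c - u j * e))
          + v j * (↑d⁻¹ * (u i * e - v i * c)) = e := by
        calc v i * (↑d⁻¹ * (v j * c - u j * e)) + v j * (↑d⁻¹ * (u i * e - v i * c))
            = ↑d⁻¹ * (u i * v j - u j * v i) * e := by ring
          _ = ↑d⁻¹ * ↑d * e := by rw [← hd']
          _ = e := by rw [hdi, one_mul]
      simp only [hf, Prod.ext_iff]
      rw [key u, key v]
      exact ⟨h1, h2⟩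
    have fiber_card : ∀ p : R × R,
        (univ.filter (fun X => f X = p)).card
          = (univ.filter (fun X : Fin n → R => f X = 0)).card := by
      intro p
      obtain ⟨X₀, hX₀⟩ := surj p
      refine Finset.card_bij' (fun X _ => X - X₀) (fun Y _ => Y + X₀) ?_ ?_ ?_ ?_
      · intro X hX
        rw [mem_filter] at hX ⊢
        refine ⟨mem_univ _, ?_⟩
        rw [fsub, hX.2, hX₀, sub_self]
      · intro Y hY
        rw [mem_filter] at hY ⊢
        refine ⟨mem_univ _, ?_⟩
        have : f (Y + X₀ - X₀) = f (Y + X₀) - f X₀ := fsub _ _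
        have h2 : f (Y + X₀) = f (Y + X₀ - X₀) + f X₀ := by rw [this]; ring
        rw [h2, add_sub_cancel_right, hY.2, hX₀, zero_add]
      · intro X _; simp
      · intro Y _; simp
    have hsum : ∑ p : R × R, (univ.filter (fun X => f X = p)).card
        = Fintype.card (Fin n → R) := by
      rw [← Finset.card_univ (α := Fin n → R),
        Finset.card_eq_sum_card_fiberwise (f := f) (fun x _ => mem_univ (f x))]
    have hconst : ∑ p : R × R, (univ.filter (fun X => f X = p)).card
        = (univ.filter (fun X : Fin n → R => f X = 0)).card * Fintype.card (R × R) := by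
      rw [Finset.sum_congr rfl (fun p _ => fiber_card p), Finset.sum_const,
        smul_eq_mul, Fintype.card, mul_comm]
    have hfilter : (Finset.univ.filter
        (fun X : Fin n → R => (∑ m, u m * X m) = a ∧ (∑ m, v m * X m) = b))
        = univ.filter (fun X => f X = (a, b)) := by
      apply Finset.filter_congr
      intro X _
      simp [hf, Prod.ext_iff]
    rw [hfilter, fiber_card (a, b), ← hsum, hconst]
    rw [Fintype.card_prod, sq]
end

section
/- If an n × n Hadamard matrix exists with n ≥ 3, then n is divisible by 4. -/
/-- If an `n × n` Hadamard matrix exists with `n ≥ 3`,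
then `4 ∣ n`. -/
theorem stmt_7 (n : ℕ) (hn : 3 ≤ n) (H : Matrix (Fin n) (Fin n) ℝ)
    (hentries : ∀ i j, H i j = 1 ∨ H i j = -1)
    (hHad : H * H.transpose = (n : ℝ) • (1 : Matrix (Fin n) (Fin n) ℝ)) :
    4 ∣ n := by
  have i0 : Fin n := ⟨0, by omega⟩
  have i1 : Fin n := ⟨1, by omega⟩
  have i2 : Fin n := ⟨2, by omega⟩
  have horth : ∀ i j : Fin n, i ≠ j → ∑ k, H i k * H j k = 0 := by
    intro i j h
    have h1 := congrFun (congrFun hHad i) j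
    simpa [Matrix.mul_apply, Matrix.transpose_apply, Matrix.smul_apply,
      Matrix.one_apply, h] using h1
  have hdiag : ∀ i : Fin n, ∑ k, H i k * H i k = (n : ℝ) := by
    intro i
    have h1 := congrFun (congrFun hHad i) i
    simpa [Matrix.mul_apply, Matrix.transpose_apply, Matrix.smul_apply,
      Matrix.one_apply] using h1
  set a : Fin n := ⟨0, by omega⟩
  set b : Fin n := ⟨1, by omega⟩
  set c : Fin n := ⟨2, by omega⟩
  have hab : a ≠ b := by simp [a, b, Fin.ext_iff]
  have hac : a ≠ c := by simp [a, c, Fin.ext_iff]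
  have hbc : b ≠ c := by simp [b, c, Fin.ext_iff]
  have key : ∀ k : Fin n, ∃ m : ℤ,
      (H a k + H b k) * (H a k + H c k) = 4 * (m : ℝ) := by
    intro k
    rcases hentries a k with h1 | h1 <;> rcases hentries b k with h2 | h2 <;>
      rcases hentries c k with h3 | h3
    · exact ⟨1, by rw [h1, h2, h3]; norm_num⟩
    · exact ⟨0, by rw [h1, h2, h3]; norm_num⟩
    · exact ⟨0, by rw [h1, h2, h3]; norm_num⟩
    · exact ⟨0, by rw [h1, h2, h3]; norm_num⟩
    · exact ⟨0, by rw [h1, h2, h3]; norm_num⟩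
    · exact ⟨0, by rw [h1, h2, h3]; norm_num⟩
    · exact ⟨0, by rw [h1, h2, h3]; norm_num⟩
    · exact ⟨1, by rw [h1, h2, h3]; norm_num⟩
  choose m hm using key
  have hsum : ∑ k, (H a k + H b k) * (H a k + H c k) = (n : ℝ) := by
    have e : ∀ k : Fin n, (H a k + H b k) * (H a k + H c k) =
        H a k * H a k + H a k * H c k + H b k * H a k + H b k * H c k := by
      intro k; ring
    rw [Finset.sum_congr rfl fun k _ => e k]
    rw [Finset.sum_add_distrib, Finset.sum_add_distrib, Finset.sum_add_distrib]
    have hba : ∑ k, H b k * H a k = 0 := by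
      have := horth b a (Ne.symm hab); simpa using this
    rw [hdiag a, horth a c hac, hba, horth b c hbc]
    ring
  have hsum2 : (4 : ℝ) * ((∑ k, m k : ℤ) : ℝ) = (n : ℝ) := by
    rw [← hsum]
    push_cast
    rw [Finset.mul_sum]
    exact Finset.sum_congr rfl fun k _ => (hm k).symm
  have hint : (n : ℤ) = 4 * ∑ k, m k := by exact_mod_cast hsum2.symm
  have : (4 : ℤ) ∣ (n : ℤ) := ⟨∑ k, m k, hint⟩
  exact_mod_cast this
end

section
/- Suppose there exists an n' × n' Hadamard matrix for n' = 2(p+1) where p is an odd prime (Paley-type construction). Assuming that for every sufficiently large N there is a prime between N and N + N^{0.525}, it follows that for all n, the smallest n' ≥ n for which an n' × n' Hadamard matrix exists satisfies h(n) ≤ n + O(n^{0.525}). -/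
/-- An `n × n` Hadamard matrix exists: a ±1 matrix with `H * Hᵀ = n • 1`. -/
def ExistsHadamard (n : ℕ) : Prop :=
  ∃ H : Matrix (Fin n) (Fin n) ℝ,
    (∀ i j, H i j = 1 ∨ H i j = -1) ∧
    H * H.transpose = (n : ℝ) • (1 : Matrix (Fin n) (Fin n) ℝ)

/-- `hadamardH n` is the smallest `n' ≥ n` such that an `n' × n'` Hadamard
matrix exists. -/
noncomputable def hadamardH (n : ℕ) : ℕ :=
  sInf {n' : ℕ | n ≤ n' ∧ ExistsHadamard n'}

/-- Assuming (i) for every odd prime `p` there is a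
`2(p+1) × 2(p+1)` Hadamard matrix (Paley construction), and (ii) for all
sufficiently large `N` there is a prime in `[N, N + N^{0.525}]`, it follows
that `h(n) ≤ n + O(n^{0.525})`. -/
theorem stmt_12
    (hPaley : ∀ p : ℕ, p.Prime → Odd p → ExistsHadamard (2 * (p + 1)))
    (hPrimeGap : ∃ n₀ : ℕ, ∀ n : ℕ, n₀ ≤ n →
      ∃ p : ℕ, p.Prime ∧ n ≤ p ∧ (p : ℝ) ≤ (n : ℝ) + (n : ℝ) ^ (0.525 : ℝ)) :
    ∃ C : ℝ, 0 < C ∧ ∃ n₁ : ℕ, ∀ n : ℕ, n₁ ≤ n →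
      (hadamardH n : ℝ) ≤ (n : ℝ) + C * (n : ℝ) ^ (0.525 : ℝ) := by
  obtain ⟨n₀, hgap⟩ := hPrimeGap
  refine ⟨3, by norm_num, max (2 * n₀) 9, fun n hn => ?_⟩
  have hn9 : 9 ≤ n := le_trans (le_max_right _ _) hn
  have hn0 : 2 * n₀ ≤ n := le_trans (le_max_left _ _) hn
  set m := (n + 1) / 2 with hm
  have hm0 : n₀ ≤ m := by omega
  obtain ⟨p, hp, hmp, hple⟩ := hgap m hm0
  have hm5 : 5 ≤ m := by omega
  have hodd : Odd p := hp.odd_of_ne_two (by omega)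
  have had := hPaley p hp hodd
  have hn2p : n ≤ 2 * (p + 1) := by omega
  have hle : hadamardH n ≤ 2 * (p + 1) := Nat.sInf_le ⟨hn2p, had⟩
  have hle' : (hadamardH n : ℝ) ≤ (2 * (p + 1) : ℕ) := by exact_mod_cast hle
  refine hle'.trans ?_
  push_cast
  have hmn : m ≤ n := by omega
  have hmr : (m : ℝ) ≤ ((n : ℝ) + 1) / 2 := by
    have : (2 : ℕ) * m ≤ n + 1 := by omega
    have := (Nat.cast_le (α := ℝ)).mpr this
    push_cast at this
    linarith
  have hpow : (m : ℝ) ^ (0.525 : ℝ) ≤ (n : ℝ) ^ (0.525 : ℝ) :=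
    Real.rpow_le_rpow (by positivity) (by exact_mod_cast hmn) (by norm_num)
  have h3 : (3 : ℝ) ≤ (n : ℝ) ^ (0.525 : ℝ) := by
    have h1 : (3 : ℝ) ≤ (n : ℝ) ^ ((1 : ℝ)/2) := by
      rw [← Real.sqrt_eq_rpow]
      have : (3 : ℝ) = Real.sqrt 9 := by
        rw [show (9 : ℝ) = 3 ^ 2 by norm_num, Real.sqrt_sq (by norm_num)]
      rw [this]
      exact Real.sqrt_le_sqrt (by exact_mod_cast hn9)
    have h2 : (n : ℝ) ^ ((1 : ℝ)/2) ≤ (n : ℝ) ^ (0.525 : ℝ) :=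
      Real.rpow_le_rpow_of_exponent_le (by exact_mod_cast (by omega : 1 ≤ n)) (by norm_num)
    linarith
  linarith
end

section
/- Let μ be a balanced pairwise independent distribution on [q]^k. Then the support of μ has size at least k(q−1)+1. -/
open Classical in
/-- Any balanced pairwise independent probability distribution on
`[q]^k` has support of size at least `k(q−1) + 1`. -/
theorem stmt_17 (q k : ℕ) (hq : 1 ≤ q) (μ : (Fin k → Fin q) → ℝ)
    (hμ0 : ∀ x, 0 ≤ μ x) (hμ1 : ∑ x, μ x = 1)
    (hbal : ∀ (i : Fin k) (a : Fin q),
      (∑ x : Fin k → Fin q, if x i = a then μ x else 0) = 1 / q)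
    (hpair : ∀ (i j : Fin k), i ≠ j → ∀ a b : Fin q,
      (∑ x : Fin k → Fin q, if x i = a ∧ x j = b then μ x else 0) = 1 / q ^ 2) :
    k * (q - 1) + 1 ≤ (Finset.univ.filter (fun x : Fin k → Fin q => μ x ≠ 0)).card := by
  classical
  set S : Finset (Fin k → Fin q) := Finset.univ.filter (fun x : Fin k → Fin q => μ x ≠ 0) with hS
  have hq0 : (0:ℝ) < q := by exact_mod_cast hq
  have hqne : (q:ℝ) ≠ 0 := ne_of_gt hq0
  -- indicator minus mean
  set ind : Fin k → Fin q → (Fin k → Fin q) → ℝ :=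
    fun i a x => (if x i = a then 1 else 0) - 1/q with hind
  -- basic expectations
  have hE1 : ∀ (i : Fin k) (a : Fin q),
      (∑ x : Fin k → Fin q, μ x * (if x i = a then (1:ℝ) else 0)) = 1/q := by
    intro i a
    rw [← hbal i a]
    exact Finset.sum_congr rfl (fun x _ => by by_cases h : x i = a <;> simp [h])
  have hEind : ∀ (i : Fin k) (a : Fin q), (∑ x : Fin k → Fin q, μ x * ind i a x) = 0 := by
    intro i a
    have : ∀ x : Fin k → Fin q, μ x * ind i a x
        = μ x * (if x i = a then (1:ℝ) else 0) - μ x * (1/q) := by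
      intro x; by_cases h : x i = a <;> simp [hind, h] <;> ring
    rw [Finset.sum_congr rfl (fun x _ => this x), Finset.sum_sub_distrib, hE1,
      ← Finset.sum_mul, hμ1, one_mul]
    ring
  -- second moments, distinct coordinates
  have hE2 : ∀ (i j : Fin k), i ≠ j → ∀ (a b : Fin q),
      (∑ x : Fin k → Fin q, μ x * (ind i a x * ind j b x)) = 0 := by
    intro i j hij a b
    have expand : ∀ x : Fin k → Fin q, μ x * (ind i a x * ind j b x)
        = (if x i = a ∧ x j = b then μ x else 0)
          - (1/q) * (if x i = a then μ x else 0)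
          - (1/q) * (if x j = b then μ x else 0)
          + μ x * (1/q^2) := by
      intro x
      simp only [hind]
      split_ifs <;> (first | ring1 | tauto)
    rw [Finset.sum_congr rfl (fun x _ => expand x)]
    rw [Finset.sum_add_distrib, Finset.sum_sub_distrib, Finset.sum_sub_distrib,
      hpair i j hij a b, ← Finset.mul_sum, ← Finset.mul_sum, hbal i a, hbal j b,
      ← Finset.sum_mul, hμ1, one_mul]
    field_simp
    ring
  -- second moments, same coordinate
  have hE2' : ∀ (i : Fin k) (a b : Fin q),
      (∑ x : Fin k → Fin q, μ x * (ind i a x * ind i b x))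
        = (if a = b then (1/q : ℝ) else 0) - 1/q^2 := by
    intro i a b
    have expand : ∀ x : Fin k → Fin q, μ x * (ind i a x * ind i b x)
        = (if a = b then (if x i = a then μ x else 0) else 0)
          - (1/q) * (if x i = a then μ x else 0)
          - (1/q) * (if x i = b then μ x else 0)
          + μ x * (1/q^2) := by
      intro x
      simp only [hind]
      split_ifs <;> (first | ring1 | simp_all)
    rw [Finset.sum_congr rfl (fun x _ => expand x)]
    rw [Finset.sum_add_distrib, Finset.sum_sub_distrib, Finset.sum_sub_distrib,
      ← Finset.mul_sum, ← Finset.mul_sum, hbal i a, hbal i b,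
      ← Finset.sum_mul, hμ1, one_mul]
    by_cases hab : a = b
    · simp only [if_pos hab]; rw [hbal i a]; field_simp; ring
    · simp only [if_neg hab]; rw [Finset.sum_const_zero]; field_simp; ring
  -- the distinguished point and the index type
  set a0 : Fin q := ⟨0, hq⟩ with ha0
  have hcardT : Fintype.card {a : Fin q // a ≠ a0} = q - 1 := by
    have := Fintype.card_subtype_compl (fun a : Fin q => a = a0)
    simpa [Fintype.card_subtype_eq] using this
  -- the family of functions on the support
  set v : Option (Fin k × {a : Fin q // a ≠ a0}) → (↥S → ℝ) :=
    fun o => Option.elim o (fun _ => (1:ℝ)) (fun p y => ind p.1 p.2.1 y.1) with hv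
  have hli : LinearIndependent ℝ v := by
    rw [Fintype.linearIndependent_iff]
    intro g hg
    set F : (Fin k → Fin q) → ℝ := fun x =>
      g none + ∑ p : Fin k × {a : Fin q // a ≠ a0}, g (some p) * ind p.1 p.2.1 x with hF
    have hFS : ∀ x : Fin k → Fin q, μ x * F x = 0 := by
      intro x
      by_cases hx : μ x = 0
      · rw [hx, zero_mul]
      · have hmem : x ∈ S := by simp [hS, hx]
        have h0 := congrFun hg ⟨x, hmem⟩
        rw [Finset.sum_apply, Pi.zero_apply] at h0
        have h1 : (∑ o : Option (Fin k × {a : Fin q // a ≠ a0}), (g o • v o) ⟨x, hmem⟩) = F x := by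
          rw [Fintype.sum_option]
          simp [hv, hF, mul_comm]
        rw [h1] at h0
        rw [h0, mul_zero]
    -- generic expectation identity
    have key : ∀ G : (Fin k → Fin q) → ℝ,
        g none * (∑ x : Fin k → Fin q, μ x * G x)
          + ∑ p : Fin k × {a : Fin q // a ≠ a0},
              g (some p) * (∑ x : Fin k → Fin q, μ x * (ind p.1 p.2.1 x * G x)) = 0 := by
      intro G
      have hptw : ∀ x : Fin k → Fin q, (μ x * F x) * G x
          = g none * (μ x * G x)
            + ∑ p : Fin k × {a : Fin q // a ≠ a0},
                g (some p) * (μ x * (ind p.1 p.2.1 x * G x)) := by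
        intro x
        rw [hF]
        rw [mul_add, add_mul, Finset.mul_sum, Finset.sum_mul]
        congr 1
        · ring
        · exact Finset.sum_congr rfl (fun p _ => by ring)
      have h0 : (∑ x : Fin k → Fin q, (μ x * F x) * G x) = 0 :=
        Finset.sum_eq_zero (fun x _ => by rw [hFS x, zero_mul])
      rw [Finset.sum_congr rfl (fun x _ => hptw x), Finset.sum_add_distrib,
        ← Finset.mul_sum, Finset.sum_comm] at h0
      rw [← h0]
      congr 1
      exact Finset.sum_congr rfl (fun p _ => by rw [Finset.mul_sum])
    -- first: the constant coefficient vanishes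
    have hgn : g none = 0 := by
      have h := key (fun _ => 1)
      simp only [mul_one] at h
      rw [hμ1] at h
      have h2 : ∀ p : Fin k × {a : Fin q // a ≠ a0},
          g (some p) * (∑ x : Fin k → Fin q, μ x * ind p.1 p.2.1 x) = 0 := by
        intro p; rw [hEind, mul_zero]
      rw [Finset.sum_congr rfl (fun p _ => h2 p), Finset.sum_const_zero] at h
      linarith
    intro o
    match o with
    | none => exact hgn
    | some ⟨j, b⟩ =>
      -- the key equation for each b' with the same j
      set Sj : ℝ := ∑ a : {a : Fin q // a ≠ a0}, g (some (j, a)) with hSj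
      have heq : ∀ b' : {a : Fin q // a ≠ a0},
          g (some (j, b')) * (1/q) - Sj * (1/q^2) = 0 := by
        intro b'
        have h := key (ind j b'.1)
        rw [hgn, zero_mul, zero_add] at h
        rw [Fintype.sum_prod_type] at h
        have hrow : ∀ i : Fin k,
            (∑ a : {a : Fin q // a ≠ a0},
              g (some (i, a)) * (∑ x : Fin k → Fin q, μ x * (ind i a.1 x * ind j b'.1 x)))
            = if i = j then
                (∑ a : {a : Fin q // a ≠ a0},
                  g (some (j, a)) * ((if a.1 = b'.1 then (1/q : ℝ) else 0) - 1/q^2))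
              else 0 := by
          intro i
          by_cases hij : i = j
          · subst hij
            rw [if_pos rfl]
            exact Finset.sum_congr rfl (fun a _ => by rw [hE2' i a.1 b'.1])
          · rw [if_neg hij]
            exact Finset.sum_eq_zero (fun a _ => by
              rw [hE2 i j hij a.1 b'.1, mul_zero])
        rw [Finset.sum_congr rfl (fun i _ => hrow i), Finset.sum_ite_eq' Finset.univ j] at h
        rw [if_pos (Finset.mem_univ j)] at h
        have hsplit : (∑ a : {a : Fin q // a ≠ a0},
            g (some (j, a)) * ((if a.1 = b'.1 then (1/q : ℝ) else 0) - 1/q^2))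
            = g (some (j, b')) * (1/q) - Sj * (1/q^2) := by
          have : ∀ a : {a : Fin q // a ≠ a0},
              g (some (j, a)) * ((if a.1 = b'.1 then (1/q : ℝ) else 0) - 1/q^2)
              = (if a = b' then g (some (j, a)) * (1/q) else 0) - g (some (j, a)) * (1/q^2) := by
            intro a
            by_cases hab : a = b'
            · rw [if_pos hab, if_pos (by rw [hab])]; ring
            · rw [if_neg hab, if_neg (fun h => hab (Subtype.ext h))]; ring
          rw [Finset.sum_congr rfl (fun a _ => this a), Finset.sum_sub_distrib,
            Finset.sum_ite_eq' Finset.univ b', if_pos (Finset.mem_univ b'),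
            ← Finset.sum_mul, ← hSj]
        rw [hsplit] at h
        exact h
      -- sum the equations over b' to get Sj = 0
      have hsum : Sj * (1/q) - ((q:ℝ) - 1) * (Sj * (1/q^2)) = 0 := by
        have h := Finset.sum_congr rfl (fun b' (_ : b' ∈ (Finset.univ : Finset {a : Fin q // a ≠ a0})) => heq b')
        rw [Finset.sum_const_zero, Finset.sum_sub_distrib, ← Finset.sum_mul, ← hSj,
          Finset.sum_const, Finset.card_univ, hcardT, nsmul_eq_mul] at h
        have hc : ((q - 1 : ℕ) : ℝ) = (q:ℝ) - 1 := by
          rw [Nat.cast_sub hq, Nat.cast_one]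
        rw [hc] at h
        exact h
      have hSj0 : Sj = 0 := by
        have h2 : (Sj * (1/(q:ℝ)) - ((q:ℝ) - 1) * (Sj * (1/(q:ℝ)^2))) * (q:ℝ)^2 = Sj := by
          field_simp
          ring
        rw [hsum, zero_mul] at h2
        exact h2.symm
      have := heq ⟨b, (by exact b.2 : b.1 ≠ a0)⟩
      rw [hSj0, zero_mul, sub_zero] at this
      have hb : g (some (j, ⟨b.1, b.2⟩)) = 0 := by
        rcases mul_eq_zero.mp this with h | h
        · exact h
        · exact absurd h (by positivity)
      simpa using hb
  -- conclude by dimension counting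
  have hcard := hli.fintype_card_le_finrank
  rw [Module.finrank_fintype_fun_eq_card, Fintype.card_coe] at hcard
  have hcardι : Fintype.card (Option (Fin k × {a : Fin q // a ≠ a0})) = k * (q - 1) + 1 := by
    rw [Fintype.card_option, Fintype.card_prod, Fintype.card_fin, hcardT]
  rw [hcardι] at hcard
  exact hcard
end

section
/- Let (Ω, μ) be a probability space on a finite product Ω = Ω_1 × ⋯ × Ω_k, and define ρ(Ω_1,…,Ω_k; μ) = max_{1 ≤ i ≤ k−1} ρ(Ω_{{1,…,i}}, Ω_{{i+1,…,k}}; μ), where ρ(A, B; μ) is the supremum of Cov[f(a)g(b)] over functions f : A → ℝ, g : B → ℝ with Var[f] = Var[g] = 1. If μ(w) > 0 for all w ∈ Ω, then ρ(Ω_1,…,Ω_k; μ) < 1. -/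
set_option maxHeartbeats 1000000

lemma key_cov {Ω : Type*} [Fintype Ω] [Nonempty Ω] (μ : Ω → ℝ)
    (hpos : ∀ w, 0 < μ w) (hsum : ∑ w, μ w = 1)
    (α : ℝ) (hα : ∀ w, α ≤ μ w)
    (F G : Ω → ℝ)
    (hmix : ∀ w₁ w₂ : Ω, ∃ w₃, F w₃ = F w₂ ∧ G w₃ = G w₁)
    (hF : ∑ w, μ w * (F w - ∑ w', μ w' * F w') ^ 2 = 1)
    (hG : ∑ w, μ w * (G w - ∑ w', μ w' * G w') ^ 2 = 1) :
    (∑ w, μ w * F w * G w) - (∑ w, μ w * F w) * (∑ w, μ w * G w) ≤ 1 - α / 8 := by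
  set EF := ∑ w, μ w * F w with hEF
  set EG := ∑ w, μ w * G w with hEG
  set F₀ : Ω → ℝ := fun w => F w - EF with hF₀
  set G₀ : Ω → ℝ := fun w => G w - EG with hG₀
  have hmF : ∑ w, μ w * F₀ w = 0 := by
    simp only [hF₀, mul_sub, Finset.sum_sub_distrib, ← Finset.sum_mul, hsum]
    simp [hEF]
  have hmG : ∑ w, μ w * G₀ w = 0 := by
    simp only [hG₀, mul_sub, Finset.sum_sub_distrib, ← Finset.sum_mul, hsum]
    simp [hEG]
  have hF2 : ∑ w, μ w * F₀ w ^ 2 = 1 := hF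
  have hG2 : ∑ w, μ w * G₀ w ^ 2 = 1 := hG
  have hcov : (∑ w, μ w * F w * G w) - EF * EG = ∑ w, μ w * F₀ w * G₀ w := by
    have expand : ∀ w, μ w * F w * G w
        = μ w * F₀ w * G₀ w + EF * (μ w * G₀ w) + EG * (μ w * F₀ w) + EF * EG * μ w := by
      intro w; simp only [hF₀, hG₀]; ring
    rw [Finset.sum_congr rfl (fun w _ => expand w)]
    simp only [Finset.sum_add_distrib, ← Finset.mul_sum, hmF, hmG, hsum]
    ring
  rw [hcov]
  have hsq : ∑ w, μ w * (F₀ w - G₀ w) ^ 2 = 2 - 2 * ∑ w, μ w * F₀ w * G₀ w := by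
    have e : ∀ w, μ w * (F₀ w - G₀ w) ^ 2
        = μ w * F₀ w ^ 2 + μ w * G₀ w ^ 2 - 2 * (μ w * F₀ w * G₀ w) := by
      intro w; ring
    rw [Finset.sum_congr rfl (fun w _ => e w), Finset.sum_sub_distrib,
      Finset.sum_add_distrib, hF2, hG2, ← Finset.mul_sum]
    ring
  -- find w₁ with 1 ≤ F₀ w₁ ^ 2
  obtain ⟨w₁, hw₁⟩ : ∃ w₁, 1 ≤ F₀ w₁ ^ 2 := by
    by_contra h
    push_neg at h
    have : ∑ w, μ w * F₀ w ^ 2 < ∑ w, μ w * 1 := by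
      apply Finset.sum_lt_sum_of_nonempty Finset.univ_nonempty
      intro w _
      exact mul_lt_mul_of_pos_left (h w) (hpos w)
    simp only [mul_one, hsum, hF2] at this
    exact lt_irrefl 1 this
  -- find w₂ with F₀ w₂ * F₀ w₁ < 0
  obtain ⟨w₂, hw₂⟩ : ∃ w₂, F₀ w₂ * F₀ w₁ < 0 := by
    by_contra h
    push_neg at h
    have hzero : ∑ w, μ w * (F₀ w * F₀ w₁) = 0 := by
      simp only [← mul_assoc, ← Finset.sum_mul, hmF, zero_mul]
    have hterm : 0 < μ w₁ * (F₀ w₁ * F₀ w₁) := by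
      have : (1:ℝ) ≤ F₀ w₁ * F₀ w₁ := by nlinarith [hw₁]
      nlinarith [hpos w₁]
    have : 0 < ∑ w, μ w * (F₀ w * F₀ w₁) := by
      apply Finset.sum_pos' _ ⟨w₁, Finset.mem_univ w₁, hterm⟩
      intro w _
      exact mul_nonneg (hpos w).le (h w)
    linarith [hzero]
  obtain ⟨w₃, hFw₃, hGw₃⟩ := hmix w₁ w₂
  have hF₀w₃ : F₀ w₃ = F₀ w₂ := by simp [hF₀, hFw₃]
  have hG₀w₃ : G₀ w₃ = G₀ w₁ := by simp [hG₀, hGw₃]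
  -- one of the two points has (F₀ - G₀)² ≥ 1/4
  have hdiff : 1 ≤ |F₀ w₁ - F₀ w₂| := by
    rcases lt_or_ge (F₀ w₁) 0 with h1 | h1
    · have h2 : 0 < F₀ w₂ := by nlinarith
      have : F₀ w₁ ≤ -1 := by nlinarith [hw₁]
      rw [abs_of_nonpos (by linarith)]
      linarith
    · have h2 : F₀ w₂ < 0 := by nlinarith
      have : 1 ≤ F₀ w₁ := by nlinarith [hw₁]
      rw [abs_of_nonneg (by linarith)]
      linarith
  obtain ⟨w₄, hw₄⟩ : ∃ w₄, (1:ℝ)/4 ≤ (F₀ w₄ - G₀ w₄) ^ 2 := by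
    rcases le_or_gt (1/2) |F₀ w₁ - G₀ w₁| with h | h
    · refine ⟨w₁, ?_⟩
      have hx := mul_le_mul h h (by norm_num) (abs_nonneg (F₀ w₁ - G₀ w₁))
      rw [abs_mul_abs_self] at hx
      nlinarith
    · refine ⟨w₃, ?_⟩
      rw [hF₀w₃, hG₀w₃]
      have h2 : 1/2 ≤ |F₀ w₂ - G₀ w₁| := by
        have := abs_sub_abs_le_abs_sub (F₀ w₁ - F₀ w₂) (F₀ w₁ - G₀ w₁)
        have htri := abs_sub (F₀ w₁ - F₀ w₂) (F₀ w₁ - G₀ w₁)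
        have : |F₀ w₁ - F₀ w₂| ≤ |F₀ w₁ - G₀ w₁| + |G₀ w₁ - F₀ w₂| := by
          have := abs_sub_le (F₀ w₁) (G₀ w₁) (F₀ w₂)
          linarith
        have habs : |G₀ w₁ - F₀ w₂| = |F₀ w₂ - G₀ w₁| := abs_sub_comm _ _
        linarith
      have hx := mul_le_mul h2 h2 (by norm_num) (abs_nonneg (F₀ w₂ - G₀ w₁))
      rw [abs_mul_abs_self] at hx
      nlinarith
  have hlow : α / 4 ≤ ∑ w, μ w * (F₀ w - G₀ w) ^ 2 := by
    have hle : α / 4 ≤ μ w₄ * (F₀ w₄ - G₀ w₄) ^ 2 := by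
      nlinarith [hα w₄, hpos w₄, hw₄]
    refine le_trans hle (Finset.single_le_sum (f := fun w => μ w * (F₀ w - G₀ w) ^ 2) (fun w _ => ?_) (Finset.mem_univ w₄))
    exact mul_nonneg (hpos w).le (sq_nonneg _)
  linarith [hsq, hlow]

/-- Let `μ` be a probability measure of full support on a finite
product `Ω 1 × ⋯ × Ω k`.  Then `ρ(Ω_1,…,Ω_k; μ) < 1`: there is `ρ₀ < 1`
bounding, for every split `{1,…,i} / {i+1,…,k}`, the covariance
`Cov[f·g]` over all functions `f` of the first block and `g` of the second
block having variance `1`. -/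
theorem stmt_18 {k : ℕ} (hk : 2 ≤ k) (Ω : Fin k → Type*)
    [∀ i, Fintype (Ω i)] [∀ i, Nonempty (Ω i)]
    (μ : (∀ i, Ω i) → ℝ)
    (hpos : ∀ w, 0 < μ w) (hsum : ∑ w, μ w = 1) :
    ∃ ρ₀ : ℝ, ρ₀ < 1 ∧
      ∀ (i : ℕ), i + 1 < k →
      ∀ (f : (∀ j : {j : Fin k // j.val ≤ i}, Ω j) → ℝ)
        (g : (∀ j : {j : Fin k // i < j.val}, Ω j) → ℝ),
        -- Var[f] = 1
        (∑ w : ∀ i, Ω i, μ w *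
            (f (fun j => w j) - ∑ w' : ∀ i, Ω i, μ w' * f (fun j => w' j)) ^ 2) = 1 →
        -- Var[g] = 1
        (∑ w : ∀ i, Ω i, μ w *
            (g (fun j => w j) - ∑ w' : ∀ i, Ω i, μ w' * g (fun j => w' j)) ^ 2) = 1 →
        -- Cov[f·g] ≤ ρ₀
        (∑ w : ∀ i, Ω i, μ w * f (fun j => w j) * g (fun j => w j))
          - (∑ w : ∀ i, Ω i, μ w * f (fun j => w j))
            * (∑ w : ∀ i, Ω i, μ w * g (fun j => w j)) ≤ ρ₀ := by
  have hne : (Finset.univ : Finset (∀ i, Ω i)).Nonempty := Finset.univ_nonempty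
  set α : ℝ := Finset.univ.inf' hne μ with hαdef
  have hα : ∀ w, α ≤ μ w := fun w => Finset.inf'_le μ (Finset.mem_univ w)
  have hα0 : 0 < α := by
    obtain ⟨w0, _, hw0⟩ := Finset.exists_mem_eq_inf' hne μ
    rw [hαdef, hw0]
    exact hpos w0
  refine ⟨1 - α / 8, by linarith, ?_⟩
  intro i hi f g hf hg
  exact key_cov μ hpos hsum α hα
    (fun w => f (fun j => w j)) (fun w => g (fun j => w j))
    (fun w₁ w₂ => by
      refine ⟨fun j => if j.val ≤ i then w₂ j else w₁ j, ?_, ?_⟩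
      · exact congrArg f (funext fun j => if_pos j.2)
      · exact congrArg g (funext fun j => if_neg (not_le.mpr j.2)))
    hf hg
end
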